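/- With upper-lower bound matrices Ā_{H,h} ⪰ A_H and B̄_{H,h} ⪰ B_H = A_H⁻¹, and error matrix D_h = (Ā_{H,h} − B̄_{H,h}⁻¹)/2, the guaranteed error satisfies 2 tr D_h ≤ Σ_α ‖e^(α) − e_h^(α)‖²_A + (tr A_H)² Σ_α ‖j^(α) − j_h^(α)‖²_{A⁻¹}. -/

import Mathlib

open Matrix

section Helpers

variable {n : Type*} [Fintype n] [DecidableEq n]

open scoped MatrixOrder in
private noncomputable def Matrix.PosSemidef.sqrt {A : Matrix n n ℝ} (_hA : A.PosSemidef) :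
    Matrix n n ℝ := CFC.sqrt A

open scoped MatrixOrder in
private lemma Matrix.PosSemidef.sqrt_mul_self {A : Matrix n n ℝ} (hA : A.PosSemidef) :
    hA.sqrt * hA.sqrt = A := CFC.sqrt_mul_sqrt_self A hA.nonneg

open scoped MatrixOrder in
private lemma Matrix.PosSemidef.posSemidef_sqrt {A : Matrix n n ℝ} (hA : A.PosSemidef) :
    hA.sqrt.PosSemidef := (CFC.sqrt_nonneg A).posSemidef

private lemma psd_diag_nonneg {A : Matrix n n ℝ} (hA : A.PosSemidef) (i : n) : 0 ≤ A i i := by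
  have := hA.dotProduct_mulVec_nonneg (Pi.single i 1)
  simpa [dotProduct, mulVec, Pi.single_apply, Finset.mul_sum] using this

private lemma psd_trace_nonneg {A : Matrix n n ℝ} (hA : A.PosSemidef) : 0 ≤ A.trace := by
  unfold Matrix.trace
  exact Finset.sum_nonneg fun i _ => psd_diag_nonneg hA i

private lemma herm_transpose {A : Matrix n n ℝ} (hA : A.IsHermitian) : Aᵀ = A := by
  exact (by simpa [Matrix.conjTranspose_eq_transpose_of_trivial] using hA : A.IsSymm).eq

private lemma trace_mul_nonneg {A B : Matrix n n ℝ} (hA : A.PosSemidef) (hB : B.PosSemidef) :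
    0 ≤ (A * B).trace := by
  have hS : hA.sqrt * hA.sqrt = A := hA.sqrt_mul_self
  have h1 : (hA.sqrt * B * hA.sqrt).trace = (A * B).trace := by
    rw [Matrix.trace_mul_comm, ← Matrix.mul_assoc, hS]
  have h2 : (hA.sqrt * B * hA.sqrt).PosSemidef := by
    have := hB.conjTranspose_mul_mul_same hA.sqrt
    rwa [hA.posSemidef_sqrt.isHermitian.eq] at this
  rw [← h1]; exact psd_trace_nonneg h2

private lemma psd_of_quad {A B : Matrix n n ℝ} (hA : A.IsHermitian) (hB : B.IsHermitian)
    (h : ∀ u : n → ℝ, A.mulVec u ⬝ᵥ u ≤ B.mulVec u ⬝ᵥ u) : (B - A).PosSemidef := by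
  refine Matrix.PosSemidef.of_dotProduct_mulVec_nonneg (hB.sub hA) fun x => ?_
  have := h x
  rw [dotProduct_comm (A.mulVec x), dotProduct_comm (B.mulVec x)] at this
  simpa [Matrix.sub_mulVec, dotProduct_sub] using sub_nonneg.mpr this

/-- `D ⪯ (tr D) • 1` for PSD `D`. -/
private lemma psd_trace_smul_one_sub {D : Matrix n n ℝ} (hD : D.PosSemidef) :
    (D.trace • (1 : Matrix n n ℝ) - D).PosSemidef := by
  set S := hD.sqrt with hSdef
  have hS : S * S = D := hD.sqrt_mul_self
  have hSt : Sᵀ = S := herm_transpose hD.posSemidef_sqrt.isHermitian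
  have htr : D.trace = ∑ i, ∑ j, S i j ^ 2 := by
    rw [← hS]
    simp only [Matrix.trace, Matrix.diag, Matrix.mul_apply, sq]
    refine Finset.sum_congr rfl fun i _ => Finset.sum_congr rfl fun j _ => ?_
    have : S j i = S i j := by
      simpa [Matrix.transpose_apply] using congrFun (congrFun hSt i) j
    rw [this]
  have key : ∀ x : n → ℝ, x ⬝ᵥ D.mulVec x ≤ D.trace * (x ⬝ᵥ x) := by
    intro x
    have h1 : x ⬝ᵥ D.mulVec x = (S.mulVec x) ⬝ᵥ (S.mulVec x) := by
      rw [← hS, ← Matrix.mulVec_mulVec, Matrix.dotProduct_mulVec]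
      congr 1
      rw [← Matrix.mulVec_transpose, hSt]
    have h2 : (S.mulVec x) ⬝ᵥ (S.mulVec x) = ∑ i, (∑ j, S i j * x j) ^ 2 := by
      simp [dotProduct, mulVec, sq]
    have h3 : ∀ i : n, (∑ j, S i j * x j) ^ 2 ≤ (∑ j, S i j ^ 2) * (x ⬝ᵥ x) := by
      intro i
      have := Finset.sum_mul_sq_le_sq_mul_sq Finset.univ (fun j => S i j) x
      simpa [dotProduct, sq] using this
    calc x ⬝ᵥ D.mulVec x = ∑ i, (∑ j, S i j * x j) ^ 2 := by rw [h1, h2]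
      _ ≤ ∑ i, (∑ j, S i j ^ 2) * (x ⬝ᵥ x) := Finset.sum_le_sum fun i _ => h3 i
      _ = D.trace * (x ⬝ᵥ x) := by rw [htr, ← Finset.sum_mul]
  refine Matrix.PosSemidef.of_dotProduct_mulVec_nonneg ?_ ?_
  · simp [Matrix.IsHermitian, Matrix.conjTranspose_sub, Matrix.conjTranspose_smul, hD.1.eq,
      herm_transpose hD.1]
  · intro x
    have := key x
    simp only [star_trivial, Matrix.sub_mulVec, dotProduct_sub, Matrix.smul_mulVec,
      Matrix.one_mulVec, dotProduct_smul, smul_eq_mul]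
    linarith [this, dotProduct_comm x (D.mulVec x)]

/-- Key algebraic identity: for invertible `C`, `D`,
`C⁻¹ - D⁻¹ - D⁻¹(D-C)D⁻¹ = (D⁻¹(D-C)) C⁻¹ ((D-C)D⁻¹)`. -/
private lemma key_identity {C D : Matrix n n ℝ} (hC : IsUnit C.det) (hD : IsUnit D.det) :
    C⁻¹ - D⁻¹ - D⁻¹ * (D - C) * D⁻¹ = (D⁻¹ * (D - C)) * C⁻¹ * ((D - C) * D⁻¹) := by
  have hC1 : C * C⁻¹ = 1 := Matrix.mul_nonsing_inv C hC
  have hC2 : C⁻¹ * C = 1 := Matrix.nonsing_inv_mul C hC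
  have hD1 : D * D⁻¹ = 1 := Matrix.mul_nonsing_inv D hD
  have hD2 : D⁻¹ * D = 1 := Matrix.nonsing_inv_mul D hD
  have e1 : D⁻¹ * (D - C) = 1 - D⁻¹ * C := by rw [Matrix.mul_sub, hD2]
  have e2 : (D - C) * D⁻¹ = 1 - C * D⁻¹ := by rw [Matrix.sub_mul, hD1]
  have e3 : (1 - D⁻¹ * C) * C⁻¹ = C⁻¹ - D⁻¹ := by
    rw [Matrix.sub_mul, Matrix.one_mul, Matrix.mul_assoc, hC1, Matrix.mul_one]
  have e4 : (C⁻¹ - D⁻¹) * (1 - C * D⁻¹) = C⁻¹ - D⁻¹ - (D⁻¹ - D⁻¹ * (C * D⁻¹)) := by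
    rw [Matrix.sub_mul, Matrix.mul_sub, Matrix.mul_sub, Matrix.mul_one, Matrix.mul_one,
      ← Matrix.mul_assoc, hC2, Matrix.one_mul]
  calc C⁻¹ - D⁻¹ - D⁻¹ * (D - C) * D⁻¹
      = C⁻¹ - D⁻¹ - (D⁻¹ - D⁻¹ * (C * D⁻¹)) := by
        rw [Matrix.mul_assoc, e2, Matrix.mul_sub, Matrix.mul_one]
    _ = (D⁻¹ * (D - C)) * C⁻¹ * ((D - C) * D⁻¹) := by rw [e1, e2, e3, e4]

private lemma conj_psd {A : Matrix n n ℝ} (hA : A.PosSemidef) {B : Matrix n n ℝ}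
    (hB : B.IsHermitian) (M : Matrix n n ℝ) (hM : M = B * A * B) : M.PosSemidef := by
  rw [hM]
  have := hA.conjTranspose_mul_mul_same B
  rwa [hB.eq] at this

/-- Inverse antitone: if `X ⪯ Y` (both PosDef), then `Y⁻¹ ⪯ X⁻¹`. -/
private lemma inv_antitone {X Y : Matrix n n ℝ} (hX : X.PosDef) (hY : Y.PosDef)
    (h : (Y - X).PosSemidef) : (X⁻¹ - Y⁻¹).PosSemidef := by
  have hXd : IsUnit X.det := isUnit_iff_ne_zero.mpr hX.det_pos.ne'
  have hYd : IsUnit Y.det := isUnit_iff_ne_zero.mpr hY.det_pos.ne'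
  have hid := key_identity hXd hYd
  have hYinvH : (Y⁻¹).IsHermitian := (hY.posSemidef.inv).isHermitian
  have p1 : (Y⁻¹ * (Y - X) * Y⁻¹).PosSemidef := conj_psd h hYinvH _ rfl
  have p2 : ((Y⁻¹ * (Y - X)) * X⁻¹ * ((Y - X) * Y⁻¹)).PosSemidef := by
    have hBt : ((Y - X) * Y⁻¹)ᴴ = Y⁻¹ * (Y - X) := by
      rw [Matrix.conjTranspose_mul, hYinvH.eq, h.isHermitian.eq]
    have := (hX.posSemidef.inv).conjTranspose_mul_mul_same ((Y - X) * Y⁻¹)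
    rwa [hBt] at this
  have : X⁻¹ - Y⁻¹ = Y⁻¹ * (Y - X) * Y⁻¹ + (Y⁻¹ * (Y - X)) * X⁻¹ * ((Y - X) * Y⁻¹) := by
    rw [← hid]; abel
  rw [this]
  exact p1.add p2

end Helpers

/-- With upper-lower bound matrices `Ā ⪰ A_H`, `B̄ ⪰ B_H = A_H⁻¹` and error matrix
`D_h = (Ā − B̄⁻¹)/2`, and with the energy-error identities
`‖e^(α) − e_h^(α)‖²_A = Ā_{αα} − A_{H,αα}`, `‖j^(α) − j_h^(α)‖²_{A⁻¹} = B̄_{αα} − B_{H,αα}`,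
the guaranteed error satisfies
`2 tr D_h ≤ Σ_α ‖e^(α) − e_h^(α)‖²_A + (tr A_H)² Σ_α ‖j^(α) − j_h^(α)‖²_{A⁻¹}`. -/
theorem stmt_16 {d : ℕ} (AH BH Ab Bb : Matrix (Fin d) (Fin d) ℝ)
    (hAH : AH.PosDef) (hBH : BH.PosDef) (hAb : Ab.PosDef) (hBb : Bb.PosDef)
    (hdual : BH = AH⁻¹)
    (h1 : ∀ u : Fin d → ℝ, AH.mulVec u ⬝ᵥ u ≤ Ab.mulVec u ⬝ᵥ u)
    (h2 : ∀ u : Fin d → ℝ, BH.mulVec u ⬝ᵥ u ≤ Bb.mulVec u ⬝ᵥ u)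
    (eErrSq jErrSq : Fin d → ℝ)
    (he : ∀ α, eErrSq α = Ab α α - AH α α)
    (hj : ∀ α, jErrSq α = Bb α α - BH α α)
    (Dh : Matrix (Fin d) (Fin d) ℝ) (hDh : Dh = (2:ℝ)⁻¹ • (Ab - Bb⁻¹)) :
    2 * Dh.trace ≤ (∑ α, eErrSq α) + AH.trace ^ 2 * ∑ α, jErrSq α := by
  have hAHd : IsUnit AH.det := isUnit_iff_ne_zero.mpr hAH.det_pos.ne'
  have hBbd : IsUnit Bb.det := isUnit_iff_ne_zero.mpr hBb.det_pos.ne'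
  have hBbinvd : IsUnit (Bb⁻¹).det := isUnit_iff_ne_zero.mpr hBb.inv.det_pos.ne'
  have hBHinv : BH⁻¹ = AH := by rw [hdual, Matrix.nonsing_inv_nonsing_inv _ hAHd]
  -- sums are traces
  have hsum_e : (∑ α, eErrSq α) = Ab.trace - AH.trace := by
    simp only [he, Matrix.trace, Matrix.diag]
    rw [Finset.sum_sub_distrib]
  have hsum_j : (∑ α, jErrSq α) = Bb.trace - BH.trace := by
    simp only [hj, Matrix.trace, Matrix.diag]
    rw [Finset.sum_sub_distrib]
  have hDhtr : 2 * Dh.trace = Ab.trace - (Bb⁻¹).trace := by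
    rw [hDh, Matrix.trace_smul, Matrix.trace_sub]
    simp [smul_eq_mul]
  set t : ℝ := AH.trace with ht
  have ht0 : 0 ≤ t := psd_trace_nonneg hAH.posSemidef
  -- E = AH - Bb⁻¹ is PSD
  have hBbBH : (Bb - BH).PosSemidef := psd_of_quad hBH.isHermitian hBb.isHermitian h2
  have hE : (AH - Bb⁻¹).PosSemidef := by
    have := inv_antitone hBH hBb hBbBH
    rwa [hBHinv] at this
  set E : Matrix (Fin d) (Fin d) ℝ := AH - Bb⁻¹ with hEdef
  -- (Bb - BH) - AH⁻¹ E AH⁻¹ is PSD, via key identity with C = Bb⁻¹, D = AH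
  have hAHinvH : (AH⁻¹).IsHermitian := hAH.posSemidef.inv.isHermitian
  have hmain : ((Bb - BH) - AH⁻¹ * E * AH⁻¹).PosSemidef := by
    have hid := key_identity hBbinvd hAHd
    rw [Matrix.nonsing_inv_nonsing_inv _ hBbd] at hid
    have hpsd : ((AH⁻¹ * E) * Bb * (E * AH⁻¹)).PosSemidef := by
      have hBt : (E * AH⁻¹)ᴴ = AH⁻¹ * E := by
        rw [Matrix.conjTranspose_mul, hAHinvH.eq, hE.isHermitian.eq]
      have := hBb.posSemidef.conjTranspose_mul_mul_same (E * AH⁻¹)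
      rwa [hBt] at this
    have : (Bb - BH) - AH⁻¹ * E * AH⁻¹ = (AH⁻¹ * E) * Bb * (E * AH⁻¹) := by
      rw [hdual, hEdef, ← hid]
    rw [this]; exact hpsd
  -- trace inequality 1: trace (AH⁻¹ E AH⁻¹) ≤ trace (Bb - BH)
  have hineq1 : (AH⁻¹ * E * AH⁻¹).trace ≤ Bb.trace - BH.trace := by
    have := psd_trace_nonneg hmain
    rw [Matrix.trace_sub, Matrix.trace_sub] at this
    linarith
  -- trace inequality 2: trace E ≤ t^2 * trace (AH⁻¹ E AH⁻¹)
  have hM : (t ^ 2 • (AH⁻¹ * AH⁻¹) - 1).PosSemidef := by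
    have hsq : (t ^ 2 • (1 : Matrix (Fin d) (Fin d) ℝ) - AH * AH).PosSemidef := by
      have h1' : (t • ((t • (1 : Matrix (Fin d) (Fin d) ℝ)) - AH)).PosSemidef := by
        have hp := psd_trace_smul_one_sub hAH.posSemidef
        refine Matrix.PosSemidef.of_dotProduct_mulVec_nonneg ?_ fun x => ?_
        · show _ᴴ = _
          rw [Matrix.conjTranspose_smul, hp.isHermitian.eq, star_trivial]
        have := hp.dotProduct_mulVec_nonneg x
        simp only [Matrix.smul_mulVec, dotProduct_smul, smul_eq_mul] at *
        exact mul_nonneg ht0 this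
      have h2' : (hAH.posSemidef.sqrt * ((t • (1 : Matrix (Fin d) (Fin d) ℝ)) - AH) *
          hAH.posSemidef.sqrt).PosSemidef :=
        conj_psd (psd_trace_smul_one_sub hAH.posSemidef)
          hAH.posSemidef.posSemidef_sqrt.isHermitian _ rfl
      have hsum := h1'.add h2'
      have heq : t • ((t • (1 : Matrix (Fin d) (Fin d) ℝ)) - AH) +
          hAH.posSemidef.sqrt * ((t • (1 : Matrix (Fin d) (Fin d) ℝ)) - AH) *
          hAH.posSemidef.sqrt
          = t ^ 2 • (1 : Matrix (Fin d) (Fin d) ℝ) - AH * AH := by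
        have hS : hAH.posSemidef.sqrt * hAH.posSemidef.sqrt = AH := hAH.posSemidef.sqrt_mul_self
        have hSA : hAH.posSemidef.sqrt * AH * hAH.posSemidef.sqrt = AH * AH := by
          calc hAH.posSemidef.sqrt * AH * hAH.posSemidef.sqrt
              = hAH.posSemidef.sqrt * (hAH.posSemidef.sqrt * hAH.posSemidef.sqrt) *
                hAH.posSemidef.sqrt := by rw [hS]
            _ = (hAH.posSemidef.sqrt * hAH.posSemidef.sqrt) *
                (hAH.posSemidef.sqrt * hAH.posSemidef.sqrt) := by
                simp only [Matrix.mul_assoc]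
            _ = AH * AH := by rw [hS]
        simp only [Matrix.mul_sub, Matrix.sub_mul, Matrix.mul_smul, Matrix.smul_mul,
          Matrix.mul_one, Matrix.one_mul, smul_sub, smul_smul, hS, hSA]
        rw [sq]
        abel
      rwa [heq] at hsum
    have : t ^ 2 • (AH⁻¹ * AH⁻¹) - 1 =
        AH⁻¹ * (t ^ 2 • (1 : Matrix (Fin d) (Fin d) ℝ) - AH * AH) * AH⁻¹ := by
      have hi1 : AH⁻¹ * AH = 1 := Matrix.nonsing_inv_mul AH hAHd
      have hi2 : AH * AH⁻¹ = 1 := Matrix.mul_nonsing_inv AH hAHd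
      simp only [Matrix.mul_sub, Matrix.sub_mul, Matrix.mul_smul, Matrix.smul_mul,
        Matrix.mul_one, Matrix.one_mul, Matrix.mul_assoc, hi1]
      rw [hi2, Matrix.mul_one, hi1]
    exact conj_psd hsq hAHinvH _ this
  have hineq2 : E.trace ≤ t ^ 2 * (AH⁻¹ * E * AH⁻¹).trace := by
    have hcyc : (AH⁻¹ * E * AH⁻¹).trace = (E * (AH⁻¹ * AH⁻¹)).trace := by
      rw [trace_mul_cycle, ← Matrix.mul_assoc, Matrix.trace_mul_comm, Matrix.mul_assoc]
    have hprod : 0 ≤ (E * (t ^ 2 • (AH⁻¹ * AH⁻¹) - 1)).trace := trace_mul_nonneg hE hM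
    have hexp : (E * (t ^ 2 • (AH⁻¹ * AH⁻¹) - 1)).trace
        = t ^ 2 * (E * (AH⁻¹ * AH⁻¹)).trace - E.trace := by
      rw [Matrix.mul_sub, Matrix.trace_sub, Matrix.mul_smul, Matrix.trace_smul, Matrix.mul_one]
      simp [smul_eq_mul]
    rw [hcyc]
    linarith [hexp ▸ hprod]
  -- assemble
  have hEtr : E.trace = AH.trace - (Bb⁻¹).trace := by rw [hEdef, Matrix.trace_sub]
  have hfinal : E.trace ≤ t ^ 2 * (Bb.trace - BH.trace) := by
    calc E.trace ≤ t ^ 2 * (AH⁻¹ * E * AH⁻¹).trace := hineq2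
      _ ≤ t ^ 2 * (Bb.trace - BH.trace) := by
          exact mul_le_mul_of_nonneg_left hineq1 (sq_nonneg t)
  rw [hDhtr, hsum_e, hsum_j]
  rw [hEtr] at hfinal
  linarith
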